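/- (Convergence of the weak greedy algorithm.) In the weak greedy setting, suppose in addition that the linear span of S is dense in X, that for each m ≥ 1 there is a best approximation w_m of f_{m−1} in S, that the sequence (μ_m)_{m≥1} is non-increasing, and that Σ_{m≥1} μ_m²/m = ∞. Then the sequence (u_m)_{m≥1} converges to u (equivalently, f_m → 0). -/

import Mathlib

open scoped RealInnerProductSpace Topology

/-- Auxiliary real-sequence lemma: if `q` is a nonneg nonincreasing sequence,
`σ` nonneg with `∑ q σ² ≤ B` and `c ≤ σ m (C + 2 ∑_{k<m} σ k)` for all `m`,
then `∑ q m / (m+1)` converges. -/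
lemma weak_greedy_aux (c B C : ℝ) (hc : 0 < c) (hC : 1 ≤ C)
    (q σ : ℕ → ℝ) (hq0 : ∀ m, 0 ≤ q m) (hqmono : ∀ m, q (m + 1) ≤ q m)
    (hσ0 : ∀ m, 0 ≤ σ m)
    (hsum : ∀ M : ℕ, ∑ m ∈ Finset.range M, q m * σ m ^ 2 ≤ B)
    (hlb : ∀ m : ℕ, c ≤ σ m * (C + 2 * ∑ k ∈ Finset.range m, σ k)) :
    Summable (fun m : ℕ => q m / (m + 1 : ℝ)) := by
  set T : ℕ → ℝ := fun m => C + 2 * ∑ k ∈ Finset.range m, σ k with hT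
  have hTpos : ∀ m, 0 < T m := by
    intro m
    have h : 0 ≤ ∑ k ∈ Finset.range m, σ k := Finset.sum_nonneg fun k _ => hσ0 k
    simp only [hT]; linarith
  have hTsucc : ∀ m, T (m + 1) = T m + 2 * σ m := by
    intro m
    simp only [hT, Finset.sum_range_succ]; ring
  have hσT : ∀ m, c ≤ σ m * T m := hlb
  have hTsq : ∀ m : ℕ, 1 + 4 * c * m ≤ T m ^ 2 := by
    intro m
    induction m with
    | zero => simp only [hT, Finset.range_zero, Finset.sum_empty, Nat.cast_zero]; nlinarith
    | succ n ih =>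
        have h1 := hσT n
        have h2 := hσ0 n
        rw [hTsucc n]
        push_cast
        push_cast at ih
        nlinarith
  set L : ℕ → ℝ := fun m => Real.log (T m) with hL
  set Λ : ℕ → ℝ := fun m => (1 / 2) * Real.log (1 + 4 * c * m) with hΛ
  have hΛL : ∀ m, Λ m ≤ L m := by
    intro m
    have h1 : (0:ℝ) < 1 + 4 * c * m := by positivity
    have h2 : Real.log (1 + 4 * c * m) ≤ Real.log (T m ^ 2) :=
      Real.log_le_log h1 (hTsq m)
    rw [Real.log_pow] at h2
    simp only [hL, hΛ]
    push_cast at h2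
    linarith
  have hΛ0 : Λ 0 = 0 := by simp [hΛ]
  have hstep1 : ∀ m, q m * (L (m + 1) - L m) ≤ (2 / c) * (q m * σ m ^ 2) := by
    intro m
    have hTm := hTpos m
    have hTm1 := hTpos (m + 1)
    have hlog : L (m + 1) - L m ≤ 2 * σ m / T m := by
      have h := Real.log_le_sub_one_of_pos (div_pos hTm1 hTm)
      rw [Real.log_div hTm1.ne' hTm.ne'] at h
      have h2 : T (m + 1) / T m - 1 = 2 * σ m / T m := by
        rw [hTsucc m]; field_simp; ring
      rw [h2] at h
      simpa only [hL] using h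
    have hσ' : 2 * σ m / T m ≤ (2 / c) * σ m ^ 2 := by
      have he : (2 / c) * σ m ^ 2 = 2 * σ m ^ 2 / c := by ring
      rw [he, div_le_div_iff₀ hTm hc]
      nlinarith [hσT m, hσ0 m]
    calc q m * (L (m + 1) - L m) ≤ q m * ((2 / c) * σ m ^ 2) :=
          mul_le_mul_of_nonneg_left (hlog.trans hσ') (hq0 m)
      _ = (2 / c) * (q m * σ m ^ 2) := by ring
  have habel : ∀ M : ℕ, ∑ m ∈ Finset.range M, q m * (Λ (m + 1) - Λ m)
      ≤ ∑ m ∈ Finset.range M, q m * (L (m + 1) - L m) + q 0 * (L 0 - Λ 0)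
        - q M * (L M - Λ M) := by
    intro M
    induction M with
    | zero => simp
    | succ n ih =>
        rw [Finset.sum_range_succ, Finset.sum_range_succ]
        have h1 := hqmono n
        have h2 := hΛL (n + 1)
        have h3 : 0 ≤ (q n - q (n + 1)) * (L (n + 1) - Λ (n + 1)) :=
          mul_nonneg (by linarith) (by linarith)
        nlinarith [ih]
  have hbound : ∀ M : ℕ, ∑ m ∈ Finset.range M, q m * (Λ (m + 1) - Λ m)
      ≤ (2 / c) * B + q 0 * L 0 := by
    intro M
    have h1 : ∑ m ∈ Finset.range M, q m * (L (m + 1) - L m) ≤ (2 / c) * B := by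
      calc ∑ m ∈ Finset.range M, q m * (L (m + 1) - L m)
          ≤ ∑ m ∈ Finset.range M, (2 / c) * (q m * σ m ^ 2) :=
            Finset.sum_le_sum fun m _ => hstep1 m
        _ = (2 / c) * ∑ m ∈ Finset.range M, q m * σ m ^ 2 := by
            rw [Finset.mul_sum]
        _ ≤ (2 / c) * B := by
            have : (0:ℝ) ≤ 2 / c := by positivity
            exact mul_le_mul_of_nonneg_left (hsum M) this
    have h2 := habel M
    have h3 : 0 ≤ q M * (L M - Λ M) := mul_nonneg (hq0 M) (by linarith [hΛL M])
    rw [hΛ0] at h2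
    linarith
  set K : ℝ := (1 + 4 * c) / (2 * c) with hK
  have hKpos : 0 < K := by positivity
  have hterm : ∀ m : ℕ, q m / (m + 1 : ℝ) ≤ K * (q m * (Λ (m + 1) - Λ m)) := by
    intro m
    have hm1 : (0:ℝ) < (m : ℝ) + 1 := by positivity
    have hx : (0:ℝ) < 1 + 4 * c * ((m : ℝ) + 1) := by positivity
    have hy : (0:ℝ) < 1 + 4 * c * (m : ℝ) := by positivity
    have hlog2 : (4 * c) / (1 + 4 * c * ((m : ℝ) + 1))
        ≤ Real.log (1 + 4 * c * ((m : ℝ) + 1)) - Real.log (1 + 4 * c * (m : ℝ)) := by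
      have h := Real.log_le_sub_one_of_pos (div_pos hy hx)
      rw [Real.log_div hy.ne' hx.ne'] at h
      have h3 : (1 + 4 * c * (m : ℝ)) / (1 + 4 * c * ((m : ℝ) + 1)) - 1
          = -((4 * c) / (1 + 4 * c * ((m : ℝ) + 1))) := by
        field_simp
        ring
      rw [h3] at h
      linarith
    have hΛstep : (2 * c) / ((1 + 4 * c) * ((m : ℝ) + 1)) ≤ Λ (m + 1) - Λ m := by
      have hx2 : 1 + 4 * c * ((m : ℝ) + 1) ≤ (1 + 4 * c) * ((m : ℝ) + 1) := by
        have hm0 : (0:ℝ) ≤ (m : ℝ) := Nat.cast_nonneg m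
        nlinarith
      have h4 : (2 * c) / ((1 + 4 * c) * ((m : ℝ) + 1))
          ≤ (2 * c) / (1 + 4 * c * ((m : ℝ) + 1)) := by
        gcongr
      have h5 : (2 * c) / (1 + 4 * c * ((m : ℝ) + 1))
          = (1 / 2) * ((4 * c) / (1 + 4 * c * ((m : ℝ) + 1))) := by ring
      have h6 : Λ (m + 1) - Λ m
          = (1 / 2) * (Real.log (1 + 4 * c * ((m : ℝ) + 1))
            - Real.log (1 + 4 * c * (m : ℝ))) := by
        simp only [hΛ]
        push_cast
        ring
      rw [h6]
      rw [h5] at h4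
      linarith
    have h7 : q m * ((2 * c) / ((1 + 4 * c) * ((m : ℝ) + 1))) ≤ q m * (Λ (m + 1) - Λ m) :=
      mul_le_mul_of_nonneg_left hΛstep (hq0 m)
    have h8 : q m / ((m : ℝ) + 1) = K * (q m * ((2 * c) / ((1 + 4 * c) * ((m : ℝ) + 1)))) := by
      rw [hK]
      have hc' : c ≠ 0 := hc.ne'
      have h14 : (1:ℝ) + 4 * c ≠ 0 := by positivity
      field_simp
    calc q m / ((m : ℝ) + 1) = K * (q m * ((2 * c) / ((1 + 4 * c) * ((m : ℝ) + 1)))) := h8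
      _ ≤ K * (q m * (Λ (m + 1) - Λ m)) := mul_le_mul_of_nonneg_left h7 hKpos.le
  apply summable_of_sum_range_le (c := K * ((2 / c) * B + q 0 * L 0))
  · intro n
    exact div_nonneg (hq0 n) (by positivity)
  · intro M
    calc ∑ m ∈ Finset.range M, q m / (m + 1 : ℝ)
        ≤ ∑ m ∈ Finset.range M, K * (q m * (Λ (m + 1) - Λ m)) :=
          Finset.sum_le_sum fun m _ => hterm m
      _ = K * ∑ m ∈ Finset.range M, q m * (Λ (m + 1) - Λ m) := by rw [Finset.mul_sum]
      _ ≤ K * ((2 / c) * B + q 0 * L 0) := mul_le_mul_of_nonneg_left (hbound M) hKpos.le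

/-- If `w` is a best approximation of `x` in a set `S` closed under scalar
multiplication, then `‖x-w‖² = ‖x‖² - ‖w‖²` and `|⟪x,v⟫| ≤ ‖w‖‖v‖` for `v ∈ S`. -/
lemma greedy_inner_bound {X : Type*} [NormedAddCommGroup X] [InnerProductSpace ℝ X]
    {S : Set X} (hScone : ∀ (c : ℝ), ∀ v ∈ S, c • v ∈ S)
    {x w : X} (hwS : w ∈ S) (hwd : ‖x - w‖ = Metric.infDist x S) :
    ‖x - w‖ ^ 2 = ‖x‖ ^ 2 - ‖w‖ ^ 2 ∧ ∀ v ∈ S, |⟪x, v⟫| ≤ ‖w‖ * ‖v‖ := by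
  have hmin : ∀ v ∈ S, ∀ c : ℝ, ‖x - w‖ ≤ ‖x - c • v‖ := by
    intro v hv c
    rw [hwd]
    have h : Metric.infDist x S ≤ dist x (c • v) :=
      Metric.infDist_le_dist_of_mem (hScone c v hv)
    rwa [dist_eq_norm] at h
  have hsq : ∀ v ∈ S, ⟪x, v⟫ ^ 2 ≤ (‖x‖ ^ 2 - ‖x - w‖ ^ 2) * ‖v‖ ^ 2 := by
    intro v hv
    rcases eq_or_ne v 0 with rfl | hv0
    · simp
    · have hvn : (0:ℝ) < ‖v‖ := norm_pos_iff.2 hv0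
      have h := hmin v hv (⟪x, v⟫ / ‖v‖ ^ 2)
      have hns : ‖(⟪x, v⟫ / ‖v‖ ^ 2) • v‖ ^ 2 = (⟪x, v⟫ / ‖v‖ ^ 2) ^ 2 * ‖v‖ ^ 2 := by
        rw [norm_smul, Real.norm_eq_abs, mul_pow, sq_abs]
      have h2 : ‖x - (⟪x, v⟫ / ‖v‖ ^ 2) • v‖ ^ 2 = ‖x‖ ^ 2 - ⟪x, v⟫ ^ 2 / ‖v‖ ^ 2 := by
        rw [norm_sub_sq_real, real_inner_smul_right, hns]
        field_simp
        ring
      have h3 : ‖x - w‖ ^ 2 ≤ ‖x - (⟪x, v⟫ / ‖v‖ ^ 2) • v‖ ^ 2 :=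
        pow_le_pow_left₀ (norm_nonneg _) h 2
      rw [h2] at h3
      have h4 : ⟪x, v⟫ ^ 2 / ‖v‖ ^ 2 ≤ ‖x‖ ^ 2 - ‖x - w‖ ^ 2 := by linarith
      have h5 : ⟪x, v⟫ ^ 2 = (⟪x, v⟫ ^ 2 / ‖v‖ ^ 2) * ‖v‖ ^ 2 := by
        field_simp
      rw [h5]
      exact mul_le_mul_of_nonneg_right h4 (sq_nonneg _)
  have hw2 : ⟪x, w⟫ = ‖w‖ ^ 2 := by
    have h1 := hsq w hwS
    have h2 : ‖x - w‖ ^ 2 = ‖x‖ ^ 2 - 2 * ⟪x, w⟫ + ‖w‖ ^ 2 := norm_sub_sq_real x w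
    have h3 : (⟪x, w⟫ - ‖w‖ ^ 2) ^ 2 ≤ 0 := by nlinarith
    have h4 : (⟪x, w⟫ - ‖w‖ ^ 2) ^ 2 = 0 := le_antisymm h3 (sq_nonneg _)
    have h5 : ⟪x, w⟫ - ‖w‖ ^ 2 = 0 := by
      exact pow_eq_zero_iff (by norm_num) |>.mp h4
    linarith
  have hpyth : ‖x - w‖ ^ 2 = ‖x‖ ^ 2 - ‖w‖ ^ 2 := by
    have h2 : ‖x - w‖ ^ 2 = ‖x‖ ^ 2 - 2 * ⟪x, w⟫ + ‖w‖ ^ 2 := norm_sub_sq_real x w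
    rw [hw2] at h2
    linarith
  refine ⟨hpyth, fun v hv => ?_⟩
  have h1 := hsq v hv
  rw [hpyth] at h1
  have h2 : (0:ℝ) ≤ ‖w‖ * ‖v‖ := by positivity
  nlinarith [abs_nonneg ⟪x, v⟫, sq_abs ⟪x, v⟫]

/-- Convergence of the weak greedy algorithm: if the span of `S` is dense, best
approximations in `S` exist, `(μ_m)` is non-increasing and `Σ μ_m²/m = ∞`, then
`u_m → u`. -/
theorem weak_greedy_converges {X : Type*}
    [NormedAddCommGroup X] [InnerProductSpace ℝ X] [CompleteSpace X]
    (S : Set X) (hS : S.Nonempty) (hScone : ∀ (c : ℝ), ∀ v ∈ S, c • v ∈ S)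
    (hdense : Dense (Submodule.span ℝ S : Set X))
    (u : X) (wt : ℕ → X) (hwtS : ∀ m : ℕ, wt (m + 1) ∈ S)
    (ut : ℕ → X) (hut0 : ut 0 = 0) (hutrec : ∀ m : ℕ, ut (m + 1) = ut m + wt (m + 1))
    (f : ℕ → X) (hf : ∀ m : ℕ, f m = u - ut m)
    (γ : ℕ → ℝ) (hγ : ∀ m : ℕ, 0 ≤ γ (m + 1))
    (hquasi : ∀ m : ℕ, ‖f m - wt (m + 1)‖ ≤ (1 + γ (m + 1)) * Metric.infDist (f m) S)
    (hfpos : ∀ m : ℕ, 0 < ‖f m‖)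
    (α : ℕ → ℝ) (hα : ∀ m : ℕ, α (m + 1) = Metric.infDist (f m) S / ‖f m‖)
    (hcond : ∀ m : ℕ, (1 + γ (m + 1)) * α (m + 1) < 1)
    (μ : ℕ → ℝ)
    (hμ : ∀ m : ℕ, μ (m + 1) =
      Real.sqrt ((1 - (1 + γ (m + 1)) ^ 2 * α (m + 1) ^ 2) / (1 - α (m + 1) ^ 2)))
    (w : ℕ → X)
    (hw : ∀ m : ℕ, w (m + 1) ∈ S ∧ ‖f m - w (m + 1)‖ = Metric.infDist (f m) S)
    (hμmono : ∀ m : ℕ, μ (m + 2) ≤ μ (m + 1))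
    (hμsum : ¬ Summable (fun m : ℕ => μ (m + 1) ^ 2 / (m + 1 : ℝ))) :
    Filter.Tendsto ut Filter.atTop (𝓝 u) := by
  classical
  -- basic recursions
  have hfrec : ∀ m, f (m + 1) = f m - wt (m + 1) := by
    intro m
    rw [hf, hf, hutrec]
    abel
  -- α facts
  have hα0 : ∀ m, 0 ≤ α (m + 1) := by
    intro m
    rw [hα m]
    exact div_nonneg Metric.infDist_nonneg (norm_nonneg _)
  have h1γ : ∀ m, (1:ℝ) ≤ 1 + γ (m + 1) := fun m => by linarith [hγ m]
  have hα1 : ∀ m, α (m + 1) < 1 := by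
    intro m
    have h := hcond m
    have h2 : α (m + 1) ≤ (1 + γ (m + 1)) * α (m + 1) := by
      nlinarith [hα0 m, h1γ m]
    linarith
  have hd_eq : ∀ m, Metric.infDist (f m) S = α (m + 1) * ‖f m‖ := by
    intro m
    rw [hα m]
    exact (div_mul_cancel₀ _ (hfpos m).ne').symm
  -- norms are decreasing
  have hrstep : ∀ m, ‖f (m + 1)‖ ≤ ‖f m‖ := by
    intro m
    have h := hquasi m
    rw [hd_eq m] at h
    rw [hfrec m]
    calc ‖f m - wt (m + 1)‖ ≤ (1 + γ (m + 1)) * (α (m + 1) * ‖f m‖) := h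
      _ = ((1 + γ (m + 1)) * α (m + 1)) * ‖f m‖ := by ring
      _ ≤ 1 * ‖f m‖ := mul_le_mul_of_nonneg_right (hcond m).le (norm_nonneg _)
      _ = ‖f m‖ := one_mul _
  have hrant : Antitone (fun m => ‖f m‖) := antitone_nat_of_succ_le hrstep
  have hbdd : BddBelow (Set.range fun m => ‖f m‖) :=
    ⟨0, by rintro x ⟨m, rfl⟩; exact norm_nonneg _⟩
  have htends : Filter.Tendsto (fun m => ‖f m‖) Filter.atTop (𝓝 (⨅ m, ‖f m‖)) :=
    tendsto_atTop_ciInf hrant hbdd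
  have hrinf0 : 0 ≤ ⨅ m, ‖f m‖ := le_ciInf fun m => norm_nonneg _
  set rinf : ℝ := ⨅ m, ‖f m‖ with hrinf_def
  have hkey : Filter.Tendsto (fun m => ‖f m‖) Filter.atTop (𝓝 0) → 
      Filter.Tendsto ut Filter.atTop (𝓝 u) := by
    intro h
    rw [tendsto_iff_norm_sub_tendsto_zero]
    have heq : ∀ m, ‖ut m - u‖ = ‖f m‖ := by
      intro m
      rw [hf m, ← norm_neg]
      congr 1
      abel
    simpa only [heq] using h
  rcases eq_or_lt_of_le hrinf0 with h0 | hpos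
  · exact hkey (h0 ▸ htends)
  exfalso
  apply hμsum
  -- the contradiction branch: rinf > 0, show summability
  have hrinf_le : ∀ m, rinf ≤ ‖f m‖ := fun m => ciInf_le hbdd m
  have hr0le : ∀ m, ‖f m‖ ≤ ‖f 0‖ := fun m => hrant (Nat.zero_le m)
  -- inner-product bounds from best approximations
  have hbd : ∀ m, ∀ v ∈ S, |⟪f m, v⟫| ≤ ‖w (m + 1)‖ * ‖v‖ :=
    fun m => (greedy_inner_bound hScone (hw m).1 (hw m).2).2
  have hpyth : ∀ m, ‖f m - w (m + 1)‖ ^ 2 = ‖f m‖ ^ 2 - ‖w (m + 1)‖ ^ 2 :=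
    fun m => (greedy_inner_bound hScone (hw m).1 (hw m).2).1
  -- s² = (1-α²) r²
  have hs2 : ∀ m, ‖w (m + 1)‖ ^ 2 = (1 - α (m + 1) ^ 2) * ‖f m‖ ^ 2 := by
    intro m
    have h1 := hpyth m
    rw [(hw m).2, hd_eq m] at h1
    nlinarith [h1]
  -- key recursion: μ² s² ≤ r m² - r (m+1)²
  have hrec : ∀ m, μ (m + 1) ^ 2 * ‖w (m + 1)‖ ^ 2 ≤ ‖f m‖ ^ 2 - ‖f (m + 1)‖ ^ 2 := by
    intro m
    have hnum : 0 ≤ 1 - (1 + γ (m + 1)) ^ 2 * α (m + 1) ^ 2 := by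
      have h := hcond m
      have h2 : 0 ≤ (1 + γ (m + 1)) * α (m + 1) :=
        mul_nonneg (by linarith [h1γ m]) (hα0 m)
      nlinarith
    have hden : 0 < 1 - α (m + 1) ^ 2 := by
      have := hα0 m; have := hα1 m; nlinarith
    have hμ2 : μ (m + 1) ^ 2
        = (1 - (1 + γ (m + 1)) ^ 2 * α (m + 1) ^ 2) / (1 - α (m + 1) ^ 2) := by
      rw [hμ m]
      exact Real.sq_sqrt (div_nonneg hnum hden.le)
    have hμs : μ (m + 1) ^ 2 * ‖w (m + 1)‖ ^ 2
        = (1 - (1 + γ (m + 1)) ^ 2 * α (m + 1) ^ 2) * ‖f m‖ ^ 2 := by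
      rw [hμ2, hs2 m]
      field_simp
    have hstepsq : ‖f (m + 1)‖ ^ 2 ≤ (1 + γ (m + 1)) ^ 2 * α (m + 1) ^ 2 * ‖f m‖ ^ 2 := by
      have h := hquasi m
      rw [hd_eq m] at h
      have h2 : ‖f (m + 1)‖ ≤ (1 + γ (m + 1)) * (α (m + 1) * ‖f m‖) := by
        rw [hfrec m]; exact h
      have h3 : ‖f (m + 1)‖ ^ 2 ≤ ((1 + γ (m + 1)) * (α (m + 1) * ‖f m‖)) ^ 2 :=
        pow_le_pow_left₀ (norm_nonneg _) h2 2
      nlinarith [h3]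
    rw [hμs]
    nlinarith [hstepsq, sq_nonneg ‖f m‖]
  -- telescoping sum bound
  have hqs : ∀ M : ℕ, ∑ m ∈ Finset.range M, μ (m + 1) ^ 2 * ‖w (m + 1)‖ ^ 2 ≤ ‖f 0‖ ^ 2 := by
    intro M
    have h : ∀ M : ℕ, ∑ m ∈ Finset.range M, μ (m + 1) ^ 2 * ‖w (m + 1)‖ ^ 2 + ‖f M‖ ^ 2
        ≤ ‖f 0‖ ^ 2 := by
      intro M
      induction M with
      | zero => simp
      | succ n ih =>
          rw [Finset.sum_range_succ]
          have := hrec n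
          linarith
    have h2 := h M
    nlinarith [sq_nonneg ‖f M‖]
  -- density: pick g close to u
  set ε : ℝ := rinf ^ 2 / (2 * (‖f 0‖ + 1)) with hε_def
  have hεpos : 0 < ε := by
    have : 0 < ‖f 0‖ + 1 := by positivity
    positivity
  obtain ⟨g, hg_mem, hg_dist⟩ := hdense.exists_dist_lt u hεpos
  obtain ⟨n, cf, vg, hgsum⟩ := Submodule.mem_span_set'.mp hg_mem
  set vv : Fin n → X := fun i => cf i • (vg i : X) with hvv
  have hvS : ∀ i, vv i ∈ S := fun i => hScone (cf i) _ (vg i).2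
  have hg_eq : g = ∑ i, vv i := by rw [← hgsum]
  set C : ℝ := (∑ i, ‖vv i‖) + 1 with hC_def
  have hC1 : (1:ℝ) ≤ C := by
    have : 0 ≤ ∑ i, ‖vv i‖ := Finset.sum_nonneg fun i _ => norm_nonneg _
    simp only [hC_def]; linarith
  -- u_m as a sum
  have hut_eq : ∀ m, ut m = ∑ k ∈ Finset.range m, wt (k + 1) := by
    intro m
    induction m with
    | zero => simpa using hut0
    | succ k ih => rw [hutrec, ih, Finset.sum_range_succ]
  -- steps are controlled by best approximations
  have hwtle : ∀ m, ‖wt (m + 1)‖ ≤ 2 * ‖w (m + 1)‖ := by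
    intro m
    have hA : ‖f m - wt (m + 1)‖ ≤ ‖f m‖ := by
      rw [← hfrec m]; exact hrstep m
    have hexp : ‖f m - wt (m + 1)‖ ^ 2
        = ‖f m‖ ^ 2 - 2 * ⟪f m, wt (m + 1)⟫ + ‖wt (m + 1)‖ ^ 2 :=
      norm_sub_sq_real _ _
    have hA2 : ‖f m - wt (m + 1)‖ ^ 2 ≤ ‖f m‖ ^ 2 :=
      pow_le_pow_left₀ (norm_nonneg _) hA 2
    have hib : ⟪f m, wt (m + 1)⟫ ≤ ‖w (m + 1)‖ * ‖wt (m + 1)‖ :=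
      (le_abs_self _).trans (hbd m _ (hwtS m))
    rcases eq_or_lt_of_le (norm_nonneg (wt (m + 1))) with h0' | h0'
    · rw [← h0']
      positivity
    · nlinarith [hexp, hA2, hib]
  -- the lower bound inequality
  have hstar : ∀ m, rinf ^ 2 / 2
      ≤ ‖w (m + 1)‖ * (C + 2 * ∑ k ∈ Finset.range m, ‖w (k + 1)‖) := by
    intro m
    have split : ⟪f m, u - g⟫ + ⟪f m, g⟫ - ⟪f m, ut m⟫ = ‖f m‖ ^ 2 := by
      rw [inner_sub_right]
      have : ⟪f m, u⟫ - ⟪f m, g⟫ + ⟪f m, g⟫ - ⟪f m, ut m⟫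
          = ⟪f m, u⟫ - ⟪f m, ut m⟫ := by ring
      rw [this, ← inner_sub_right, ← hf m, real_inner_self_eq_norm_sq]
    have b1 : ⟪f m, u - g⟫ ≤ rinf ^ 2 / 2 := by
      have h1 : ⟪f m, u - g⟫ ≤ ‖f m‖ * ‖u - g‖ := real_inner_le_norm _ _
      have h2 : ‖u - g‖ ≤ ε := by
        rw [← dist_eq_norm]; exact hg_dist.le
      have h3 : ‖f m‖ * ‖u - g‖ ≤ (‖f 0‖ + 1) * ε :=
        mul_le_mul (by linarith [hr0le m]) h2 (norm_nonneg _) (by positivity)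
      have h4 : (‖f 0‖ + 1) * ε = rinf ^ 2 / 2 := by
        rw [hε_def]
        have : ‖f 0‖ + 1 ≠ 0 := by positivity
        field_simp
      linarith
    have b2 : ⟪f m, g⟫ ≤ ‖w (m + 1)‖ * C := by
      rw [hg_eq, inner_sum]
      calc ∑ i, ⟪f m, vv i⟫ ≤ ∑ i, ‖w (m + 1)‖ * ‖vv i‖ :=
            Finset.sum_le_sum fun i _ => (le_abs_self _).trans (hbd m _ (hvS i))
        _ = ‖w (m + 1)‖ * ∑ i, ‖vv i‖ := by rw [Finset.mul_sum]
        _ ≤ ‖w (m + 1)‖ * C := by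
            apply mul_le_mul_of_nonneg_left _ (norm_nonneg _)
            simp only [hC_def]; linarith
    have b3 : -⟪f m, ut m⟫ ≤ ‖w (m + 1)‖ * (2 * ∑ k ∈ Finset.range m, ‖w (k + 1)‖) := by
      rw [hut_eq m, inner_sum]
      have h1 : ∀ k ∈ Finset.range m, -⟪f m, wt (k + 1)⟫
          ≤ ‖w (m + 1)‖ * (2 * ‖w (k + 1)‖) := by
        intro k _
        have h2 : |⟪f m, wt (k + 1)⟫| ≤ ‖w (m + 1)‖ * ‖wt (k + 1)‖ := hbd m _ (hwtS k)
        have h3 : ‖w (m + 1)‖ * ‖wt (k + 1)‖ ≤ ‖w (m + 1)‖ * (2 * ‖w (k + 1)‖) :=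
          mul_le_mul_of_nonneg_left (hwtle k) (norm_nonneg _)
        calc -⟪f m, wt (k + 1)⟫ ≤ |⟪f m, wt (k + 1)⟫| := neg_le_abs _
          _ ≤ _ := h2.trans h3
      calc -∑ k ∈ Finset.range m, ⟪f m, wt (k + 1)⟫
          = ∑ k ∈ Finset.range m, -⟪f m, wt (k + 1)⟫ := by rw [Finset.sum_neg_distrib]
        _ ≤ ∑ k ∈ Finset.range m, ‖w (m + 1)‖ * (2 * ‖w (k + 1)‖) := Finset.sum_le_sum h1
        _ = ‖w (m + 1)‖ * (2 * ∑ k ∈ Finset.range m, ‖w (k + 1)‖) := by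
            simp only [Finset.mul_sum]
    have hr2 : rinf ^ 2 ≤ ‖f m‖ ^ 2 := pow_le_pow_left₀ hpos.le (hrinf_le m) 2
    have hexpand : ‖w (m + 1)‖ * (C + 2 * ∑ k ∈ Finset.range m, ‖w (k + 1)‖)
        = ‖w (m + 1)‖ * C + ‖w (m + 1)‖ * (2 * ∑ k ∈ Finset.range m, ‖w (k + 1)‖) := by
      ring
    have s1 : ⟪f m, u - g⟫ ≤ rinf ^ 2 / 2 := by linarith [b1]
    have s2 : ⟪f m, g⟫ ≤ ‖w (m + 1)‖ * C := by linarith [b2]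
    have s3 : -⟪f m, ut m⟫ ≤ ‖w (m + 1)‖ * (2 * ∑ k ∈ Finset.range m, ‖w (k + 1)‖) := by
      linarith [b3]
    have s4 : ⟪f m, u - g⟫ + ⟪f m, g⟫ - ⟪f m, ut m⟫ = ‖f m‖ ^ 2 := by linarith [split]
    have t2 : ⟪f m, u - g⟫ + ⟪f m, g⟫ ≤ rinf ^ 2 / 2 + ‖w (m + 1)‖ * C := by
      exact add_le_add s1 s2
    have t3 : ⟪f m, u - g⟫ + ⟪f m, g⟫ - ⟪f m, ut m⟫ ≤ rinf ^ 2 / 2 + ‖w (m + 1)‖ * C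
        + ‖w (m + 1)‖ * (2 * ∑ k ∈ Finset.range m, ‖w (k + 1)‖) := by
      linarith [t2, s3]
    have t1 : ‖f m‖ ^ 2 ≤ rinf ^ 2 / 2 + ‖w (m + 1)‖ * C
        + ‖w (m + 1)‖ * (2 * ∑ k ∈ Finset.range m, ‖w (k + 1)‖) := by
      rw [← s4]
      exact t3
    rw [hexpand]
    linarith [t1, hr2]
  -- monotonicity of q = μ²
  have hμ0 : ∀ m, 0 ≤ μ (m + 1) := by
    intro m
    rw [hμ m]
    exact Real.sqrt_nonneg _
  have hqmono : ∀ m, μ (m + 1 + 1) ^ 2 ≤ μ (m + 1) ^ 2 := by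
    intro m
    exact pow_le_pow_left₀ (hμ0 (m + 1)) (hμmono m) 2
  have := weak_greedy_aux (rinf ^ 2 / 2) (‖f 0‖ ^ 2) C (by positivity) hC1
    (fun m => μ (m + 1) ^ 2) (fun m => ‖w (m + 1)‖)
    (fun m => sq_nonneg _) hqmono (fun m => norm_nonneg _) hqs hstar
  simpa using this
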